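/- For every real u with 0 < u < 2 − √3, the series ∑_{x=0}^∞ (a(x+1,0) − a(x,0)) · u^{2x+1} converges and equals u · arccot( √3·(1+u²) / √(1 − 14u² + u⁴) ) / ( π · √(1 − 14u² + u⁴) ), where arccot takes values in (0, π/2) on positive arguments and 1 − 14u² + u⁴ > 0 for such u. In particular a(1,0) − a(0,0) = 1/6 and a(2,0) − a(1,0) = 7/6 − 2√3/π. -/

import Mathlib

open intervalIntegral

noncomputable def triPot (x y : ℤ) : ℝ :=
  (1 / (4 * Real.pi ^ 2)) *
    ∫ θ in (0 : ℝ)..(2 * Real.pi), ∫ φ in (0 : ℝ)..(2 * Real.pi),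
      (1 - Real.cos ((x : ℝ) * θ + (y : ℝ) * φ)) /
        (6 - 2 * Real.cos θ - 2 * Real.cos φ - 2 * Real.cos (θ + φ))

/-- The inverse cotangent, with values in `(0, π/2)` on positive arguments. -/
noncomputable def arccot (x : ℝ) : ℝ := Real.pi / 2 - Real.arctan x


section Aux
open Real MeasureTheory


lemma integral_inv_const_sub_cos (A B c : ℝ) (h : B ^ 2 < A ^ 2) (hA : 0 < A) :
    ∫ φ in (0:ℝ)..(2 * π), (A - B * Real.cos (φ + c))⁻¹
      = 2 * π / Real.sqrt (A ^ 2 - B ^ 2) := by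
  set S := Real.sqrt (A ^ 2 - B ^ 2) with hS
  have hS2 : S ^ 2 = A ^ 2 - B ^ 2 := Real.sq_sqrt (by linarith)
  have hSpos : 0 < S := Real.sqrt_pos.2 (by linarith)
  have hBA : |B| < A := by
    have := Real.sqrt_lt_sqrt (sq_nonneg B) h
    rwa [Real.sqrt_sq_eq_abs, Real.sqrt_sq hA.le] at this
  -- denominators positive
  have hDen : ∀ x : ℝ, 0 < A - B * Real.cos x := fun x => by
    have h1 : B * Real.cos x ≤ |B| := by
      calc B * Real.cos x ≤ |B * Real.cos x| := le_abs_self _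
        _ = |B| * |Real.cos x| := abs_mul _ _
        _ ≤ |B| * 1 := by
            exact mul_le_mul_of_nonneg_left (Real.abs_cos_le_one x) (abs_nonneg B)
        _ = |B| := mul_one _
    linarith
  have hD2 : ∀ x : ℝ, 0 < A + S - B * Real.cos x := fun x => by
    have := hDen x; linarith
  -- antiderivative
  set F : ℝ → ℝ := fun φ =>
    S⁻¹ * (φ - 2 * Real.arctan (-B * Real.sin (φ + c) / (A + S - B * Real.cos (φ + c))))
  have key : ∀ φ : ℝ, HasDerivAt F ((A - B * Real.cos (φ + c))⁻¹) φ := by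
    intro φ
    have hD : A + S - B * Real.cos (φ + c) ≠ 0 := (hD2 _).ne'
    have hsc : HasDerivAt (fun φ : ℝ => φ + c) 1 φ := by
      simpa using (hasDerivAt_id φ).add_const c
    have hN : HasDerivAt (fun φ : ℝ => -B * Real.sin (φ + c)) (-B * Real.cos (φ + c)) φ := by
      simpa using ((Real.hasDerivAt_sin (φ + c)).comp φ hsc).const_mul (-B)
    have hDD : HasDerivAt (fun φ : ℝ => A + S - B * Real.cos (φ + c)) (B * Real.sin (φ + c)) φ := by
      have : HasDerivAt (fun φ : ℝ => Real.cos (φ + c)) (-Real.sin (φ + c)) φ := by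
        have h := (Real.hasDerivAt_cos (φ + c)).comp φ hsc
        simp only [mul_one] at h
        exact h
      simpa using ((this.const_mul B).const_sub (A + S))
    have hq : HasDerivAt (fun φ : ℝ => -B * Real.sin (φ + c) / (A + S - B * Real.cos (φ + c)))
        ((-B * Real.cos (φ + c) * (A + S - B * Real.cos (φ + c)) -
          -B * Real.sin (φ + c) * (B * Real.sin (φ + c))) /
          (A + S - B * Real.cos (φ + c)) ^ 2) φ := hN.div hDD hD
    have harct := (hq.arctan)
    have hF : HasDerivAt F (S⁻¹ * (1 - 2 * _)) φ := (((hasDerivAt_id φ).sub (harct.const_mul 2)).const_mul S⁻¹)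
    convert hF using 1
    set cs := Real.cos (φ + c); set sn := Real.sin (φ + c)
    have hpy : sn ^ 2 + cs ^ 2 = 1 := Real.sin_sq_add_cos_sq _
    have h1 : (0:ℝ) < A - B * cs := hDen _
    have hAS : (0:ℝ) < A + S := by linarith
    have e1 : (A + S - B * cs) ^ 2 + (-B * sn) ^ 2 = 2 * (A + S) * (A - B * cs) := by
      linear_combination B ^ 2 * hpy + hS2
    have e2 : -B * cs * (A + S - B * cs) - -B * sn * (B * sn) = B ^ 2 - B * cs * (A + S) := by
      linear_combination B ^ 2 * hpy
    have e3 : 1 / (1 + (-B * sn / (A + S - B * cs)) ^ 2) *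
        ((-B * cs * (A + S - B * cs) - -B * sn * (B * sn)) / (A + S - B * cs) ^ 2)
        = (B ^ 2 - B * cs * (A + S)) / (2 * (A + S) * (A - B * cs)) := by
      rw [← e2, ← e1]
      have hD0 : (A + S - B * cs) ≠ 0 := (hD2 _).ne'
      have hD1 : (A + S - B * cs) ^ 2 + (-B * sn) ^ 2 ≠ 0 := by
        rw [e1]; positivity
      field_simp
    rw [e3]
    have e4 : 1 - 2 * ((B ^ 2 - B * cs * (A + S)) / (2 * (A + S) * (A - B * cs)))
        = S / (A - B * cs) := by
      have h2 : (A + S) ≠ 0 := hAS.ne'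
      have h1' : A - B * cs ≠ 0 := h1.ne'
      field_simp
      linear_combination -hS2
    rw [e4]
    rw [eq_comm, inv_mul_eq_div, div_div, mul_comm, ← div_div]
    rw [div_self hSpos.ne', one_div]
  have hcont : Continuous fun φ : ℝ => (A - B * Real.cos (φ + c))⁻¹ := by
    apply Continuous.inv₀ (by continuity) (fun x => (hDen _).ne')
  have := intervalIntegral.integral_eq_sub_of_hasDerivAt (f := F)
      (fun x _ => key x) (hcont.intervalIntegrable 0 (2 * π))
  rw [this]
  have h2π : Real.sin (2 * π + c) = Real.sin c ∧ Real.cos (2 * π + c) = Real.cos c := by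
    constructor
    · rw [add_comm]; exact Real.sin_add_two_pi c
    · rw [add_comm]; exact Real.cos_add_two_pi c
  simp only [F, zero_add, h2π.1, h2π.2]
  field_simp
  ring

lemma inner_eval (K θ : ℝ) (hθ : θ ∈ Set.Ioo 0 (2 * π)) :
    ∫ φ in (0:ℝ)..(2 * π),
        K / (6 - 2 * Real.cos θ - 2 * Real.cos φ - 2 * Real.cos (θ + φ))
      = K * (π / Real.sqrt ((1 - Real.cos θ) * (7 - Real.cos θ))) := by
  obtain ⟨hθ0, hθ2⟩ := hθ
  have hden : ∀ φ : ℝ, 6 - 2 * Real.cos θ - 2 * Real.cos φ - 2 * Real.cos (θ + φ)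
      = (6 - 2 * Real.cos θ) - (4 * Real.cos (θ / 2)) * Real.cos (φ + θ / 2) := by
    intro φ
    have h := Real.cos_add_cos φ (θ + φ)
    rw [show (φ + (θ + φ)) / 2 = φ + θ / 2 by ring,
        show (φ - (θ + φ)) / 2 = -(θ / 2) by ring, Real.cos_neg] at h
    linear_combination (-2 : ℝ) * h
  have hcos1 : Real.cos θ < 1 := by
    have hs : 0 < Real.sin (θ / 2) := Real.sin_pos_of_pos_of_lt_pi (by linarith) (by linarith)
    have h1 : Real.cos θ = 1 - 2 * Real.sin (θ / 2) ^ 2 := by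
      have h2 := Real.cos_sq (θ / 2)
      rw [show 2 * (θ / 2) = θ by ring] at h2
      have hpy := Real.sin_sq_add_cos_sq (θ / 2)
      linarith
    nlinarith
  have hB2 : (4 * Real.cos (θ / 2)) ^ 2 = 8 * (1 + Real.cos θ) := by
    have h2 := Real.cos_sq (θ / 2)
    rw [show 2 * (θ / 2) = θ by ring] at h2
    nlinarith [h2]
  have hAB : (6 - 2 * Real.cos θ) ^ 2 - (4 * Real.cos (θ / 2)) ^ 2
      = 4 * ((1 - Real.cos θ) * (7 - Real.cos θ)) := by
    rw [hB2]; ring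
  have hprod : 0 < (1 - Real.cos θ) * (7 - Real.cos θ) := by
    have := Real.neg_one_le_cos θ
    nlinarith
  have hA : 0 < 6 - 2 * Real.cos θ := by have := Real.cos_le_one θ; linarith
  have hlt : (4 * Real.cos (θ / 2)) ^ 2 < (6 - 2 * Real.cos θ) ^ 2 := by nlinarith
  calc ∫ φ in (0:ℝ)..(2 * π),
        K / (6 - 2 * Real.cos θ - 2 * Real.cos φ - 2 * Real.cos (θ + φ))
      = ∫ φ in (0:ℝ)..(2 * π),
          K * ((6 - 2 * Real.cos θ) - (4 * Real.cos (θ / 2)) * Real.cos (φ + θ / 2))⁻¹ := by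
        apply intervalIntegral.integral_congr
        intro φ _
        dsimp only
        rw [hden φ, div_eq_mul_inv]
    _ = K * ∫ φ in (0:ℝ)..(2 * π),
          ((6 - 2 * Real.cos θ) - (4 * Real.cos (θ / 2)) * Real.cos (φ + θ / 2))⁻¹ :=
        intervalIntegral.integral_const_mul _ _
    _ = K * (π / Real.sqrt ((1 - Real.cos θ) * (7 - Real.cos θ))) := by
        rw [integral_inv_const_sub_cos _ _ _ hlt hA, hAB]
        rw [show (4 : ℝ) * ((1 - Real.cos θ) * (7 - Real.cos θ))
            = 2 ^ 2 * ((1 - Real.cos θ) * (7 - Real.cos θ)) by ring,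
          Real.sqrt_mul (by positivity) _, Real.sqrt_sq (by norm_num)]
        rw [show (2:ℝ) * π / (2 * Real.sqrt ((1 - Real.cos θ) * (7 - Real.cos θ)))
            = π / Real.sqrt ((1 - Real.cos θ) * (7 - Real.cos θ)) by
          rw [mul_div_mul_left _ _ (by norm_num)]]

/-- The closed form of the inner integral. -/
noncomputable def hFun (k : ℕ) (θ : ℝ) : ℝ :=
  (1 - Real.cos (k * θ)) * (π / Real.sqrt ((1 - Real.cos θ) * (7 - Real.cos θ)))

lemma abs_sin_nat_mul_le (n : ℕ) (x : ℝ) : |Real.sin (n * x)| ≤ n * |Real.sin x| := by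
  induction n with
  | zero => simp
  | succ m ih =>
      have : ((m + 1 : ℕ) : ℝ) * x = m * x + x := by push_cast; ring
      rw [this, Real.sin_add]
      calc |Real.sin (m * x) * Real.cos x + Real.cos (m * x) * Real.sin x|
          ≤ |Real.sin (m * x) * Real.cos x| + |Real.cos (m * x) * Real.sin x| := abs_add_le _ _
        _ ≤ |Real.sin (m * x)| * 1 + 1 * |Real.sin x| := by
            rw [abs_mul, abs_mul]
            gcongr
            · exact Real.abs_cos_le_one x
            · exact Real.abs_cos_le_one _
        _ ≤ m * |Real.sin x| + 1 * |Real.sin x| := by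
            have := ih
            nlinarith [abs_nonneg (Real.sin x)]
        _ = ((m + 1 : ℕ) : ℝ) * |Real.sin x| := by push_cast; ring

lemma one_sub_cos_eq (y : ℝ) : 1 - Real.cos y = 2 * Real.sin (y / 2) ^ 2 := by
  have h2 := Real.cos_sq (y / 2)
  rw [show 2 * (y / 2) = y by ring] at h2
  have hpy := Real.sin_sq_add_cos_sq (y / 2)
  linarith

lemma one_sub_cos_mul_le (k : ℕ) (θ : ℝ) :
    1 - Real.cos (k * θ) ≤ k ^ 2 * (1 - Real.cos θ) := by
  rw [one_sub_cos_eq, one_sub_cos_eq]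
  have h : |Real.sin (k * θ / 2)| ≤ k * |Real.sin (θ / 2)| := by
    rw [show (k : ℝ) * θ / 2 = k * (θ / 2) by ring]
    exact abs_sin_nat_mul_le k (θ / 2)
  nlinarith [abs_nonneg (Real.sin (k * θ / 2)), abs_nonneg (Real.sin (θ / 2)),
    sq_abs (Real.sin (k * θ / 2)), sq_abs (Real.sin (θ / 2))]

lemma hFun_nonneg (k : ℕ) (θ : ℝ) : 0 ≤ hFun k θ := by
  unfold hFun
  have h1 : Real.cos (k * θ) ≤ 1 := Real.cos_le_one _
  apply mul_nonneg (by linarith) (by positivity)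

lemma hFun_le (k : ℕ) (θ : ℝ) : hFun k θ ≤ k ^ 2 * π := by
  unfold hFun
  rcases eq_or_lt_of_le (Real.cos_le_one θ) with hc | hc
  · rw [show (1 : ℝ) - Real.cos θ = 0 by rw [← hc]; ring]
    simp [Real.sqrt_zero]
    positivity
  · have hd : 0 < 1 - Real.cos θ := by linarith
    have h7 : (6:ℝ) ≤ 7 - Real.cos θ := by have := Real.neg_one_le_cos θ; linarith
    have hs : Real.sqrt (6 * (1 - Real.cos θ)) ≤
        Real.sqrt ((1 - Real.cos θ) * (7 - Real.cos θ)) := by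
      apply Real.sqrt_le_sqrt; nlinarith
    have hs0 : 0 < Real.sqrt (6 * (1 - Real.cos θ)) := Real.sqrt_pos.2 (by positivity)
    have hnum : 1 - Real.cos (k * θ) ≤ k ^ 2 * (1 - Real.cos θ) := one_sub_cos_mul_le k θ
    have hnn : 0 ≤ 1 - Real.cos (k * θ) := by have := Real.cos_le_one (k * θ); linarith
    calc (1 - Real.cos (k * θ)) * (π / Real.sqrt ((1 - Real.cos θ) * (7 - Real.cos θ)))
        ≤ (k ^ 2 * (1 - Real.cos θ)) * (π / Real.sqrt (6 * (1 - Real.cos θ))) := by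
          apply mul_le_mul hnum _ (by positivity) (by positivity)
          apply div_le_div_of_nonneg_left Real.pi_pos.le hs0 hs
      _ ≤ k ^ 2 * π := by
          rw [show (k:ℝ) ^ 2 * (1 - Real.cos θ) * (π / Real.sqrt (6 * (1 - Real.cos θ)))
              = (k:ℝ) ^ 2 * π * ((1 - Real.cos θ) / Real.sqrt (6 * (1 - Real.cos θ))) by ring]
          have hle1 : (1 - Real.cos θ) / Real.sqrt (6 * (1 - Real.cos θ)) ≤ 1 := by
            rw [div_le_one hs0]
            rw [show (6:ℝ) * (1 - Real.cos θ) = 6 * (1 - Real.cos θ) from rfl]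
            apply Real.le_sqrt' hd |>.2
            nlinarith [Real.neg_one_le_cos θ]
          exact mul_le_of_le_one_right (by positivity) hle1

lemma hFun_measurable (k : ℕ) : Measurable (hFun k) := by
  unfold hFun
  fun_prop

lemma hFun_intble (k : ℕ) : IntervalIntegrable (hFun k) volume 0 (2 * π) := by
  rw [intervalIntegrable_iff]
  apply MeasureTheory.Integrable.mono' (g := fun _ => (k:ℝ) ^ 2 * π)
    (MeasureTheory.integrableOn_const measure_Ioc_lt_top.ne)
    ((hFun_measurable k).aestronglyMeasurable.restrict)
  filter_upwards with θ
  rw [Real.norm_eq_abs, abs_of_nonneg (hFun_nonneg k θ)]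
  exact hFun_le k θ

lemma triPot_eq (k : ℕ) :
    triPot (k : ℤ) 0 = (1 / (4 * π ^ 2)) * ∫ θ in (0:ℝ)..(2 * π), hFun k θ := by
  unfold triPot
  congr 1
  apply intervalIntegral.integral_congr_ae
  have hnull : (volume ({2 * π} : Set ℝ)) = 0 := measure_singleton _
  filter_upwards [MeasureTheory.measure_eq_zero_iff_ae_notMem.mp hnull] with θ hθ hmem
  rw [Set.uIoc_of_le (by positivity : (0:ℝ) ≤ 2 * π)] at hmem
  have hθIoo : θ ∈ Set.Ioo 0 (2 * π) := ⟨hmem.1, lt_of_le_of_ne hmem.2 hθ⟩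
  have := inner_eval (1 - Real.cos (k * θ)) θ hθIoo
  simp only [Int.cast_natCast, Int.cast_zero, zero_mul, add_zero, hFun] at *
  exact this

lemma diff_eq (n : ℕ) :
    triPot ((n : ℤ) + 1) 0 - triPot (n : ℤ) 0
      = (1 / (2 * π)) * ∫ t in (0:ℝ)..π,
          Real.sin ((2 * n + 1) * t) / Real.sqrt (3 + Real.sin t ^ 2) := by
  have hπ := Real.pi_pos
  have hcast : ((n : ℤ) + 1) = ((n + 1 : ℕ) : ℤ) := by push_cast; ring
  rw [hcast, triPot_eq (n + 1), triPot_eq n, ← mul_sub,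
      ← intervalIntegral.integral_sub (hFun_intble _) (hFun_intble _)]
  have hsub := intervalIntegral.integral_comp_mul_left
      (a := (0:ℝ)) (b := π) (fun θ => hFun (n + 1) θ - hFun n θ) (by norm_num : (2:ℝ) ≠ 0)
  rw [mul_zero, smul_eq_mul] at hsub
  have h2π : ∫ θ in (0:ℝ)..(2 * π), (hFun (n + 1) θ - hFun n θ)
      = 2 * ∫ t in (0:ℝ)..π, (hFun (n + 1) (2 * t) - hFun n (2 * t)) := by
    rw [hsub]; ring
  rw [h2π]
  have key : ∀ t ∈ Set.Ioo (0:ℝ) π,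
      hFun (n + 1) (2 * t) - hFun n (2 * t)
        = π * (Real.sin ((2 * n + 1) * t) / Real.sqrt (3 + Real.sin t ^ 2)) := by
    intro t ht
    have hst : 0 < Real.sin t := Real.sin_pos_of_pos_of_lt_pi ht.1 ht.2
    have h1 : 1 - Real.cos (2 * t) = 2 * Real.sin t ^ 2 := by
      have := one_sub_cos_eq (2 * t); rwa [show 2 * t / 2 = t by ring] at this
    have h2 : 7 - Real.cos (2 * t) = 2 * (3 + Real.sin t ^ 2) := by linarith
    have hsq : Real.sqrt ((1 - Real.cos (2 * t)) * (7 - Real.cos (2 * t)))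
        = 2 * Real.sin t * Real.sqrt (3 + Real.sin t ^ 2) := by
      rw [h1, h2, show 2 * Real.sin t ^ 2 * (2 * (3 + Real.sin t ^ 2))
          = (2 * Real.sin t) ^ 2 * (3 + Real.sin t ^ 2) by ring,
        Real.sqrt_mul (by positivity), Real.sqrt_sq (by positivity)]
    have hcc : Real.cos ((n : ℝ) * (2 * t)) - Real.cos (((n : ℝ) + 1) * (2 * t))
        = 2 * Real.sin ((2 * n + 1) * t) * Real.sin t := by
      rw [Real.cos_sub_cos,
        show ((n : ℝ) * (2 * t) + ((n : ℝ) + 1) * (2 * t)) / 2 = (2 * n + 1) * t by ring,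
        show ((n : ℝ) * (2 * t) - ((n : ℝ) + 1) * (2 * t)) / 2 = -t by ring,
        Real.sin_neg]
      ring
    unfold hFun
    rw [hsq]
    push_cast
    have hS : (0:ℝ) < Real.sqrt (3 + Real.sin t ^ 2) := Real.sqrt_pos.2 (by positivity)
    field_simp
    ring_nf
    ring_nf at hcc
    linear_combination hcc
  have hcongr : ∫ t in (0:ℝ)..π, (hFun (n + 1) (2 * t) - hFun n (2 * t))
      = ∫ t in (0:ℝ)..π, π * (Real.sin ((2 * n + 1) * t) / Real.sqrt (3 + Real.sin t ^ 2)) := by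
    apply intervalIntegral.integral_congr_ae
    have hnull : (volume ({π} : Set ℝ)) = 0 := measure_singleton _
    filter_upwards [MeasureTheory.measure_eq_zero_iff_ae_notMem.mp hnull] with t ht hmem
    rw [Set.uIoc_of_le hπ.le] at hmem
    exact key t ⟨hmem.1, lt_of_le_of_ne hmem.2 ht⟩
  rw [hcongr, intervalIntegral.integral_const_mul]
  field_simp
  ring

lemma sqrtS_pos (t : ℝ) : 0 < Real.sqrt (3 + Real.sin t ^ 2) := Real.sqrt_pos.2 (by positivity)

lemma sqrtS_sq (t : ℝ) : Real.sqrt (3 + Real.sin t ^ 2) ^ 2 = 3 + Real.sin t ^ 2 :=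
  Real.sq_sqrt (by positivity)

lemma contS : Continuous fun t : ℝ => Real.sqrt (3 + Real.sin t ^ 2) :=
  (continuous_const.add (Real.continuous_sin.pow 2)).sqrt

lemma hasDerivAt_sqrtS (t : ℝ) :
    HasDerivAt (fun t => Real.sqrt (3 + Real.sin t ^ 2))
      (Real.sin t * Real.cos t / Real.sqrt (3 + Real.sin t ^ 2)) t := by
  have hin : HasDerivAt (fun t : ℝ => 3 + Real.sin t ^ 2)
      (2 * Real.sin t * Real.cos t) t := by
    have := ((Real.hasDerivAt_sin t).pow 2).const_add 3
    simpa [mul_comm, mul_assoc, mul_left_comm] using this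
  have := (Real.hasDerivAt_sqrt (by positivity : (3:ℝ) + Real.sin t ^ 2 ≠ 0)).comp t hin
  refine this.congr_deriv (Eq.symm ?_)
  field_simp

lemma hasDerivAt_arcsin_cos_half (t : ℝ) :
    HasDerivAt (fun t => Real.arcsin (Real.cos t / 2))
      (-(Real.sin t / Real.sqrt (3 + Real.sin t ^ 2))) t := by
  have hc : HasDerivAt (fun t : ℝ => Real.cos t / 2) (-Real.sin t / 2) t :=
    (Real.hasDerivAt_cos t).div_const 2
  have hb1 : Real.cos t / 2 ≠ -1 := by have := Real.neg_one_le_cos t; intro h; linarith [(div_eq_iff (by norm_num : (2:ℝ) ≠ 0)).1 h]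
  have hb2 : Real.cos t / 2 ≠ 1 := by have := Real.cos_le_one t; intro h; linarith [(div_eq_iff (by norm_num : (2:ℝ) ≠ 0)).1 h]
  have := (Real.hasDerivAt_arcsin hb1 hb2).comp t hc
  refine this.congr_deriv (Eq.symm ?_)
  have hpy := Real.sin_sq_add_cos_sq t
  have h14 : 1 - (Real.cos t / 2) ^ 2 = (3 + Real.sin t ^ 2) / 4 := by nlinarith
  rw [h14, show (3 + Real.sin t ^ 2) / 4 = (3 + Real.sin t ^ 2) * (1/2)^2 by ring,
    Real.sqrt_mul (by positivity), Real.sqrt_sq (by norm_num)]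
  have := sqrtS_pos t
  field_simp

lemma arcsin_half : Real.arcsin (1 / 2) = π / 6 := by
  rw [show (1:ℝ)/2 = Real.sin (π/6) by rw [Real.sin_pi_div_six],
    Real.arcsin_sin (by linarith [Real.pi_pos]) (by linarith [Real.pi_pos])]

lemma I1 : ∫ t in (0:ℝ)..π, Real.sin t / Real.sqrt (3 + Real.sin t ^ 2) = π / 3 := by
  have hint : IntervalIntegrable (fun t => Real.sin t / Real.sqrt (3 + Real.sin t ^ 2))
      MeasureTheory.volume 0 π :=
    ((Real.continuous_sin.div contS (fun t => (sqrtS_pos t).ne')).intervalIntegrable 0 π)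
  rw [intervalIntegral.integral_eq_sub_of_hasDerivAt
      (f := fun t => -Real.arcsin (Real.cos t / 2))
      (fun t _ => by have h := (hasDerivAt_arcsin_cos_half t).neg; simp only [neg_neg] at h; exact h) hint]
  rw [Real.cos_pi, Real.cos_zero]
  rw [show (-1:ℝ)/2 = -(1/2) by ring, Real.arcsin_neg, arcsin_half]
  ring

lemma I2 : ∫ t in (0:ℝ)..π, Real.sin (3 * t) / Real.sqrt (3 + Real.sin t ^ 2)
    = 7 * π / 3 - 4 * Real.sqrt 3 := by
  have hint : IntervalIntegrable (fun t => Real.sin (3 * t) / Real.sqrt (3 + Real.sin t ^ 2))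
      MeasureTheory.volume 0 π :=
    (((Real.continuous_sin.comp (continuous_const.mul continuous_id)).div contS
      (fun t => (sqrtS_pos t).ne')).intervalIntegrable 0 π)
  have key : ∀ t : ℝ, HasDerivAt
      (fun t => -7 * Real.arcsin (Real.cos t / 2)
        + 2 * Real.cos t * Real.sqrt (3 + Real.sin t ^ 2))
      (Real.sin (3 * t) / Real.sqrt (3 + Real.sin t ^ 2)) t := by
    intro t
    have h1 := (hasDerivAt_arcsin_cos_half t).const_mul (-7)
    have h2 : HasDerivAt (fun t => 2 * Real.cos t * Real.sqrt (3 + Real.sin t ^ 2))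
        ((-2 * Real.sin t) * Real.sqrt (3 + Real.sin t ^ 2)
          + 2 * Real.cos t * (Real.sin t * Real.cos t / Real.sqrt (3 + Real.sin t ^ 2))) t := by
      have ha : HasDerivAt (fun t : ℝ => 2 * Real.cos t) (-2 * Real.sin t) t := by
        simpa [mul_comm, neg_mul, mul_neg] using (Real.hasDerivAt_cos t).const_mul 2
      exact ha.mul (hasDerivAt_sqrtS t)
    have := h1.add h2
    refine this.congr_deriv (Eq.symm ?_)
    have hS := sqrtS_pos t
    have hS2 := sqrtS_sq t
    have hpy := Real.sin_sq_add_cos_sq t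
    rw [Real.sin_three_mul]
    field_simp
    linear_combination (2 * Real.sin t) * hS2 - 2 * Real.sin t * hpy
  rw [intervalIntegral.integral_eq_sub_of_hasDerivAt (fun t _ => key t) hint]
  rw [Real.cos_pi, Real.cos_zero, Real.sin_pi, Real.sin_zero]
  rw [show (-1:ℝ)/2 = -(1/2) by ring, Real.arcsin_neg, arcsin_half]
  norm_num
  ring

lemma I3_alg (u d k S c s : ℝ) (hd0 : 0 < d) (hS0 : 0 < S) (hu1 : (0:ℝ) < 1 + u ^ 2)
    (hd2 : d ^ 2 = 1 - 14 * u ^ 2 + u ^ 4) (hS2 : S ^ 2 = 3 + s ^ 2)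
    (hpy : s ^ 2 + c ^ 2 = 1) (hk : k = d / (1 + u ^ 2))
    (hWc : 0 < (1 + u ^ 2) ^ 2 - 4 * u ^ 2 * c ^ 2) :
    u * (1 + u ^ 2) * s / ((1 - 2 * u ^ 2 * (2 * c ^ 2 - 1) + u ^ 4) * S)
      = -(u / d) * (1 / (1 + (k * (c / S)) ^ 2) * (k * ((-s * S - c * (s * c / S)) / S ^ 2))) := by
  have e1 : (-s * S - c * (s * c / S)) / S ^ 2 = -4 * s / S ^ 3 := by
    rw [div_eq_div_iff (by positivity) (by positivity)]
    field_simp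
    linear_combination (-s) * hS2 - s * hpy
  have e2 : (1 + u ^ 2) ^ 2 * S ^ 2 + d ^ 2 * c ^ 2
      = 4 * ((1 + u ^ 2) ^ 2 - 4 * u ^ 2 * c ^ 2) := by
    linear_combination (1 + u ^ 2) ^ 2 * hS2 + c ^ 2 * hd2 + (1 + u ^ 2) ^ 2 * hpy
  have e3 : 1 + (k * (c / S)) ^ 2
      = ((1 + u ^ 2) ^ 2 * S ^ 2 + d ^ 2 * c ^ 2) / ((1 + u ^ 2) ^ 2 * S ^ 2) := by
    rw [hk]; field_simp
  have edenom : 1 - 2 * u ^ 2 * (2 * c ^ 2 - 1) + u ^ 4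
      = (1 + u ^ 2) ^ 2 - 4 * u ^ 2 * c ^ 2 := by ring
  rw [e1, e3, e2, edenom, hk]
  field_simp

lemma I3 (u : ℝ) (hu0 : 0 < u) (hΔ : 0 < 1 - 14 * u ^ 2 + u ^ 4) :
    ∫ t in (0:ℝ)..π, u * (1 + u ^ 2) * Real.sin t /
        ((1 - 2 * u ^ 2 * Real.cos (2 * t) + u ^ 4) * Real.sqrt (3 + Real.sin t ^ 2))
      = 2 * u * Real.arctan (Real.sqrt (1 - 14 * u ^ 2 + u ^ 4) / (Real.sqrt 3 * (1 + u ^ 2)))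
          / Real.sqrt (1 - 14 * u ^ 2 + u ^ 4) := by
  set d := Real.sqrt (1 - 14 * u ^ 2 + u ^ 4) with hd
  have hd2 : d ^ 2 = 1 - 14 * u ^ 2 + u ^ 4 := Real.sq_sqrt hΔ.le
  have hd0 : 0 < d := Real.sqrt_pos.2 hΔ
  have hu1 : (0:ℝ) < 1 + u ^ 2 := by positivity
  set k := d / (1 + u ^ 2) with hk
  have hden : ∀ t : ℝ, 0 < 1 - 2 * u ^ 2 * Real.cos (2 * t) + u ^ 4 := by
    intro t
    nlinarith [Real.cos_le_one (2 * t), sq_nonneg u, hΔ, sq_nonneg (u^2)]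
  have hW : ∀ c : ℝ, c ^ 2 ≤ 1 → 0 < (1 + u ^ 2) ^ 2 - 4 * u ^ 2 * c ^ 2 := by
    intro c hc
    nlinarith [sq_nonneg u, hΔ, sq_nonneg (1 - u^2)]
  have key : ∀ t : ℝ, HasDerivAt
      (fun t => -(u / d) * Real.arctan (k * (Real.cos t / Real.sqrt (3 + Real.sin t ^ 2))))
      (u * (1 + u ^ 2) * Real.sin t /
        ((1 - 2 * u ^ 2 * Real.cos (2 * t) + u ^ 4) * Real.sqrt (3 + Real.sin t ^ 2))) t := by
    intro t
    have hS0 := sqrtS_pos t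
    have hS2 := sqrtS_sq t
    have hpy := Real.sin_sq_add_cos_sq t
    have hq : HasDerivAt (fun t => Real.cos t / Real.sqrt (3 + Real.sin t ^ 2))
        ((-Real.sin t * Real.sqrt (3 + Real.sin t ^ 2)
          - Real.cos t * (Real.sin t * Real.cos t / Real.sqrt (3 + Real.sin t ^ 2)))
          / Real.sqrt (3 + Real.sin t ^ 2) ^ 2) t :=
      (Real.hasDerivAt_cos t).div (hasDerivAt_sqrtS t) hS0.ne'
    have harct := ((hq.const_mul k).arctan).const_mul (-(u / d))
    refine harct.congr_deriv (Eq.symm ?_)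
    rw [Real.cos_two_mul t]
    have hWc : 0 < (1 + u ^ 2) ^ 2 - 4 * u ^ 2 * Real.cos t ^ 2 := by
      apply hW; nlinarith [Real.sin_sq_add_cos_sq t, sq_nonneg (Real.sin t)]
    exact I3_alg u d k (Real.sqrt (3 + Real.sin t ^ 2)) (Real.cos t) (Real.sin t)
      hd0 hS0 hu1 hd2 hS2 hpy hk hWc
  have hint : IntervalIntegrable (fun t => u * (1 + u ^ 2) * Real.sin t /
      ((1 - 2 * u ^ 2 * Real.cos (2 * t) + u ^ 4) * Real.sqrt (3 + Real.sin t ^ 2)))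
      MeasureTheory.volume 0 π := by
    apply Continuous.intervalIntegrable
    apply Continuous.div (by continuity)
    · exact ((continuous_const.sub (continuous_const.mul
        (Real.continuous_cos.comp (continuous_const.mul continuous_id)))).add
        continuous_const).mul contS
    · intro t
      exact (mul_pos (hden t) (sqrtS_pos t)).ne'
  rw [intervalIntegral.integral_eq_sub_of_hasDerivAt (fun t _ => key t) hint]
  rw [Real.cos_pi, Real.cos_zero, Real.sin_pi, Real.sin_zero]
  norm_num
  rw [show k * (-1 / Real.sqrt 3) = -(k * (Real.sqrt 3)⁻¹) by ring, Real.arctan_neg]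
  rw [show k * (Real.sqrt 3)⁻¹ = d / (Real.sqrt 3 * (1 + u ^ 2)) by
    rw [hk, div_mul_eq_mul_div, ← div_eq_mul_inv, div_div]]
  ring

lemma hasSum_sin_series (u t : ℝ) (hu0 : 0 ≤ u) (hu1 : u < 1) :
    HasSum (fun n : ℕ => u ^ (2 * n + 1) * Real.sin ((2 * n + 1) * t))
      (u * (1 + u ^ 2) * Real.sin t / (1 - 2 * u ^ 2 * Real.cos (2 * t) + u ^ 4)) := by
  set z : ℂ := (u : ℂ) * Complex.exp (t * Complex.I) with hz
  have habs : ‖z‖ = u := by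
    rw [hz, norm_mul, Complex.norm_real, Complex.norm_exp_ofReal_mul_I, mul_one, Real.norm_eq_abs,
      abs_of_nonneg hu0]
  have h2 : ‖z ^ 2‖ < 1 := by
    rw [norm_pow, habs]
    nlinarith
  have hgeo := (hasSum_geometric_of_norm_lt_one h2).mul_left z
  have hterm : ∀ m : ℕ, (z ^ m).im = u ^ m * Real.sin (m * t) := by
    intro m
    have harg : (m : ℂ) * ((t : ℝ) * Complex.I) = ((m * t : ℝ) : ℂ) * Complex.I := by
      push_cast; ring
    rw [hz, mul_pow, ← Complex.exp_nat_mul, harg, ← Complex.ofReal_pow, Complex.mul_im,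
      Complex.ofReal_re, Complex.ofReal_im, Complex.exp_ofReal_mul_I_re,
      Complex.exp_ofReal_mul_I_im]
    ring
  have hidx : ∀ n : ℕ, z * (z ^ 2) ^ n = z ^ (2 * n + 1) := by
    intro n; rw [← pow_mul, pow_succ, mul_comm]
  have him := Complex.imCLM.hasSum hgeo
  simp only [Complex.imCLM_apply] at him
  have him' : HasSum (fun n : ℕ => u ^ (2 * n + 1) * Real.sin ((2 * n + 1) * t))
      ((z * (1 - z ^ 2)⁻¹).im) := by
    convert him using 2 with n
    rw [hidx n, hterm (2 * n + 1)]
    push_cast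
    ring
  convert him' using 1
  have harg2 : ((2:ℕ) : ℂ) * ((t : ℝ) * Complex.I) = ((2 * t : ℝ) : ℂ) * Complex.I := by
    push_cast; ring
  have hz2 : z ^ 2 = ((u ^ 2 : ℝ) : ℂ) * Complex.exp (((2 * t : ℝ) : ℂ) * Complex.I) := by
    rw [hz, mul_pow, ← Complex.exp_nat_mul, harg2, ← Complex.ofReal_pow]
  have hre2 : (z ^ 2).re = u ^ 2 * Real.cos (2 * t) := by
    rw [hz2, Complex.mul_re, Complex.ofReal_re, Complex.ofReal_im,
      Complex.exp_ofReal_mul_I_re, Complex.exp_ofReal_mul_I_im]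
    ring
  have him2 : (z ^ 2).im = u ^ 2 * Real.sin (2 * t) := by
    rw [hz2, Complex.mul_im, Complex.ofReal_re, Complex.ofReal_im,
      Complex.exp_ofReal_mul_I_re, Complex.exp_ofReal_mul_I_im]
    ring
  have hzre : z.re = u * Real.cos t := by
    rw [hz, Complex.mul_re, Complex.ofReal_re, Complex.ofReal_im,
      Complex.exp_ofReal_mul_I_re, Complex.exp_ofReal_mul_I_im]
    ring
  have hzim : z.im = u * Real.sin t := by
    rw [hz, Complex.mul_im, Complex.ofReal_re, Complex.ofReal_im,
      Complex.exp_ofReal_mul_I_re, Complex.exp_ofReal_mul_I_im]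
    ring
  have hpy2 : Real.sin (2 * t) ^ 2 + Real.cos (2 * t) ^ 2 = 1 := Real.sin_sq_add_cos_sq _
  have hN : Complex.normSq (1 - z ^ 2) = 1 - 2 * u ^ 2 * Real.cos (2 * t) + u ^ 4 := by
    rw [Complex.normSq_apply, Complex.sub_re, Complex.sub_im, Complex.one_re, Complex.one_im,
      hre2, him2]
    linear_combination u ^ 4 * hpy2
  rw [show z * (1 - z ^ 2)⁻¹ = z / (1 - z ^ 2) by rw [div_eq_mul_inv], Complex.div_im, hN,
    Complex.sub_re, Complex.sub_im, Complex.one_re, Complex.one_im, hre2, him2, hzre, hzim,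
    div_sub_div_same]
  congr 1
  rw [Real.sin_two_mul, Real.cos_two_mul]
  ring



lemma hasSum_gf_integral (u : ℝ) (hu0 : 0 < u) (hu1 : u < 1) :
    HasSum (fun x : ℕ => ((1 / (2 * π)) * ∫ t in (0:ℝ)..π,
        Real.sin ((2 * x + 1) * t) / Real.sqrt (3 + Real.sin t ^ 2)) * u ^ (2 * x + 1))
      ((1 / (2 * π)) * ∫ t in (0:ℝ)..π, u * (1 + u ^ 2) * Real.sin t /
        ((1 - 2 * u ^ 2 * Real.cos (2 * t) + u ^ 4) * Real.sqrt (3 + Real.sin t ^ 2))) := by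
  have hπ := Real.pi_pos
  set μ : MeasureTheory.Measure ℝ := volume.restrict (Set.Ioc 0 π) with hμ
  set F : ℕ → ℝ → ℝ :=
    fun x t => u ^ (2 * x + 1) * (Real.sin ((2 * x + 1) * t) / Real.sqrt (3 + Real.sin t ^ 2))
    with hF
  have hcont : ∀ x : ℕ, Continuous (F x) := by
    intro x
    exact continuous_const.mul (((Real.continuous_sin.comp
      (continuous_const.mul continuous_id)).div contS (fun t => (sqrtS_pos t).ne')))
  have hF_int : ∀ x : ℕ, Integrable (F x) μ :=
    fun x => (hcont x).integrableOn_Ioc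
  have hbound : ∀ x : ℕ, ∀ t : ℝ, ‖F x t‖ ≤ u ^ (2 * x + 1) * (Real.sqrt 3)⁻¹ := by
    intro x t
    rw [hF, Real.norm_eq_abs, abs_mul, abs_pow, abs_of_nonneg hu0.le, abs_div]
    apply mul_le_mul_of_nonneg_left _ (by positivity)
    rw [abs_of_nonneg (Real.sqrt_nonneg _)]
    apply div_le_of_le_mul₀ (Real.sqrt_nonneg _) (by positivity)
    have h33 : Real.sqrt 3 ≤ Real.sqrt (3 + Real.sin t ^ 2) :=
      Real.sqrt_le_sqrt (by nlinarith [sq_nonneg (Real.sin t)])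
    calc |Real.sin ((2 * x + 1) * t)| ≤ 1 := Real.abs_sin_le_one _
      _ = (Real.sqrt 3)⁻¹ * Real.sqrt 3 := by
          rw [inv_mul_cancel₀ (by positivity : Real.sqrt 3 ≠ 0)]
      _ ≤ (Real.sqrt 3)⁻¹ * Real.sqrt (3 + Real.sin t ^ 2) := by gcongr
  have hF_sum : Summable fun x : ℕ => ∫ t, ‖F x t‖ ∂μ := by
    have hgeo : Summable fun x : ℕ => π * (u ^ (2 * x + 1) * (Real.sqrt 3)⁻¹) := by
      have hg2 : Summable fun x : ℕ => (π * (u * (Real.sqrt 3)⁻¹)) * (u ^ 2) ^ x := by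
        apply Summable.mul_left
        apply summable_geometric_of_lt_one (by positivity)
        nlinarith
      apply hg2.congr
      intro x
      rw [pow_add, pow_mul, pow_one]
      ring
    apply Summable.of_nonneg_of_le
      (fun x => MeasureTheory.integral_nonneg (fun t => norm_nonneg _)) (fun x => ?_) hgeo
    calc ∫ t, ‖F x t‖ ∂μ ≤ ∫ _t, u ^ (2 * x + 1) * (Real.sqrt 3)⁻¹ ∂μ := by
          apply MeasureTheory.integral_mono ((hF_int x).norm) (MeasureTheory.integrableOn_const measure_Ioc_lt_top.ne) (fun t => hbound x t)
      _ = π * (u ^ (2 * x + 1) * (Real.sqrt 3)⁻¹) := by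
          rw [MeasureTheory.integral_const]
          simp [hμ, Measure.real, Real.volume_Ioc, ENNReal.toReal_ofReal hπ.le]
  have key := MeasureTheory.hasSum_integral_of_summable_integral_norm hF_int hF_sum
  have hden : ∀ t : ℝ, 0 < 1 - 2 * u ^ 2 * Real.cos (2 * t) + u ^ 4 := by
    intro t
    have h1 : 0 < 1 - u ^ 2 := by nlinarith
    nlinarith [mul_nonneg (sq_nonneg u) (sub_nonneg.2 (Real.cos_le_one (2 * t))), mul_pos h1 h1]
  have hval : ∀ t : ℝ, (∑' x : ℕ, F x t) = u * (1 + u ^ 2) * Real.sin t /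
      ((1 - 2 * u ^ 2 * Real.cos (2 * t) + u ^ 4) * Real.sqrt (3 + Real.sin t ^ 2)) := by
    intro t
    have hs := (hasSum_sin_series u t hu0.le hu1).div_const (Real.sqrt (3 + Real.sin t ^ 2))
    have : (fun n : ℕ => u ^ (2 * n + 1) * Real.sin ((2 * n + 1) * t)
        / Real.sqrt (3 + Real.sin t ^ 2)) = fun n => F n t := by
      funext n; rw [hF]; ring
    rw [this] at hs
    rw [hs.tsum_eq, div_div]
  have hvalint : ∫ t, (∑' x : ℕ, F x t) ∂μ
      = ∫ t in (0:ℝ)..π, u * (1 + u ^ 2) * Real.sin t /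
        ((1 - 2 * u ^ 2 * Real.cos (2 * t) + u ^ 4) * Real.sqrt (3 + Real.sin t ^ 2)) := by
    rw [intervalIntegral.integral_of_le hπ.le]
    apply MeasureTheory.integral_congr_ae
    filter_upwards with t
    exact hval t
  rw [hvalint] at key
  have key2 := key.mul_left (1 / (2 * π))
  have heq : (fun x : ℕ => ((1 / (2 * π)) * ∫ t in (0:ℝ)..π,
      Real.sin ((2 * x + 1) * t) / Real.sqrt (3 + Real.sin t ^ 2)) * u ^ (2 * x + 1))
      = fun x : ℕ => (1 / (2 * π)) * ∫ t, F x t ∂μ := by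
    funext x
    rw [hF]
    rw [MeasureTheory.integral_const_mul, intervalIntegral.integral_of_le hπ.le]
    ring
  rw [heq]
  exact key2


end Aux

/-- Generating function of the axis increments of the triangular-lattice potential
kernel: for `0 < u < 2 - √3`,
`∑_{x≥0} (a(x+1,0) - a(x,0))·u^{2x+1}
  = u · arccot(√3(1+u²)/√(1-14u²+u⁴)) / (π·√(1-14u²+u⁴))`;
in particular `a(1,0) - a(0,0) = 1/6` and `a(2,0) - a(1,0) = 7/6 - 2√3/π`. -/
theorem triPot_increment_gf :
    (∀ u : ℝ, 0 < u → u < 2 - Real.sqrt 3 →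
      0 < 1 - 14 * u ^ 2 + u ^ 4 ∧
      HasSum (fun x : ℕ => (triPot ((x : ℤ) + 1) 0 - triPot (x : ℤ) 0) * u ^ (2 * x + 1))
        (u * arccot (Real.sqrt 3 * (1 + u ^ 2) / Real.sqrt (1 - 14 * u ^ 2 + u ^ 4)) /
          (Real.pi * Real.sqrt (1 - 14 * u ^ 2 + u ^ 4)))) ∧
    triPot 1 0 - triPot 0 0 = 1 / 6 ∧
    triPot 2 0 - triPot 1 0 = 7 / 6 - 2 * Real.sqrt 3 / Real.pi := by
  have hπ := Real.pi_pos
  have hs3 : Real.sqrt 3 ^ 2 = 3 := Real.sq_sqrt (by norm_num)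
  have hs3n := Real.sqrt_nonneg 3
  have h1s3 : (1:ℝ) < Real.sqrt 3 := by nlinarith
  refine ⟨?_, ?_, ?_⟩
  · intro u hu0 hub
    have hu1 : u < 1 := by linarith
    have ha : 0 < 7 - 4 * Real.sqrt 3 - u ^ 2 := by nlinarith
    have hb : 0 < 7 + 4 * Real.sqrt 3 - u ^ 2 := by nlinarith
    have hΔ : 0 < 1 - 14 * u ^ 2 + u ^ 4 := by
      have hfact : 1 - 14 * u ^ 2 + u ^ 4
          = (7 - 4 * Real.sqrt 3 - u ^ 2) * (7 + 4 * Real.sqrt 3 - u ^ 2) := by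
        linear_combination 16 * hs3
      rw [hfact]; exact mul_pos ha hb
    refine ⟨hΔ, ?_⟩
    have hd0 : 0 < Real.sqrt (1 - 14 * u ^ 2 + u ^ 4) := Real.sqrt_pos.2 hΔ
    have H := hasSum_gf_integral u hu0 hu1
    rw [I3 u hu0 hΔ] at H
    have harc : Real.arctan (Real.sqrt (1 - 14 * u ^ 2 + u ^ 4) / (Real.sqrt 3 * (1 + u ^ 2)))
        = arccot (Real.sqrt 3 * (1 + u ^ 2) / Real.sqrt (1 - 14 * u ^ 2 + u ^ 4)) := by
      rw [arccot, ← Real.arctan_inv_of_pos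
        (div_pos (by positivity) hd0), inv_div]
    rw [harc] at H
    have hval : (1 / (2 * Real.pi)) * (2 * u *
          arccot (Real.sqrt 3 * (1 + u ^ 2) / Real.sqrt (1 - 14 * u ^ 2 + u ^ 4))
          / Real.sqrt (1 - 14 * u ^ 2 + u ^ 4))
        = u * arccot (Real.sqrt 3 * (1 + u ^ 2) / Real.sqrt (1 - 14 * u ^ 2 + u ^ 4)) /
          (Real.pi * Real.sqrt (1 - 14 * u ^ 2 + u ^ 4)) := by
      field_simp
    rw [hval] at H
    have heq : ∀ x : ℕ, triPot ((x : ℤ) + 1) 0 - triPot (x : ℤ) 0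
        = (1 / (2 * Real.pi)) * ∫ t in (0:ℝ)..Real.pi,
            Real.sin ((2 * x + 1) * t) / Real.sqrt (3 + Real.sin t ^ 2) := diff_eq
    simp only [heq]
    exact H
  · have h0 := diff_eq 0
    norm_num at h0
    rw [h0, I1]
    field_simp
    ring
  · have h1 := diff_eq 1
    norm_num at h1
    rw [h1, I2]
    field_simp
    ring
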